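/- Let P be a complement isomorphism poset on [n] and 𝔽_q a finite field. Then the equivalence relation E_S on I(P), defined by (I,J) ∈ E_S iff I and J are order-isomorphic with the induced orders, is a MacWilliams-type equivalence relation: for all linear P-codes C₁, C₂ ⊆ 𝔽_q^n, if A_{Ī,E_S}(C₁) = A_{Ī,E_S}(C₂) for all order ideals I, then A_{J̄^c,E_S*}(C₁^⊥) = A_{J̄^c,E_S*}(C₂^⊥) for all order ideals J. (Theorem 4.1(iii), (a) ⇒ (b).) -/

import Mathlib

open scoped BigOperators
open Finset

noncomputable section
open scoped Classical

/-- `I ⊆ [n]` is an order ideal with respect to the order relation `le`. -/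
def IsIdeal {n : ℕ} (le : Fin n → Fin n → Prop) (I : Finset (Fin n)) : Prop :=
  ∀ a ∈ I, ∀ b, le b a → b ∈ I

/-- `⟨X⟩_P` : the smallest order ideal (w.r.t. `le`) containing `X`. -/
def idealCl {n : ℕ} (le : Fin n → Fin n → Prop) (X : Finset (Fin n)) : Finset (Fin n) :=
  Finset.univ.filter fun b => ∃ a ∈ X, le b a

/-- `M(A)` : the set of maximal elements of `A` with respect to `le`. -/
def maxSet {n : ℕ} (le : Fin n → Fin n → Prop) (A : Finset (Fin n)) : Finset (Fin n) :=
  A.filter fun a => ∀ b ∈ A, le a b → b = a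

/-- `E` is an equivalence relation on the set of order ideals of the poset `le`. -/
def EqvOnIdeals {n : ℕ} (le : Fin n → Fin n → Prop)
    (E : Finset (Fin n) → Finset (Fin n) → Prop) : Prop :=
  (∀ I J, E I J → IsIdeal le I ∧ IsIdeal le J) ∧
  (∀ I, IsIdeal le I → E I I) ∧
  (∀ I J, E I J → E J I) ∧
  (∀ I J K, E I J → E J K → E I K)

/-- support of a vector -/
def supp {n : ℕ} {F : Type} [Field F] [Fintype F] (v : Fin n → F) : Finset (Fin n) :=
  Finset.univ.filter fun i => v i ≠ 0

/-- standard dot product -/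
def dot {n : ℕ} {F : Type} [Field F] [Fintype F] (u v : Fin n → F) : F := ∑ i, u i * v i

/-- the sphere `S_I = {v : ⟨supp v⟩_P = I}` -/
def sph {n : ℕ} (F : Type) [Field F] [Fintype F] (le : Fin n → Fin n → Prop)
    (I : Finset (Fin n)) : Finset (Fin n → F) :=
  Finset.univ.filter fun v => idealCl le (supp v) = I

/-- the dual sphere `S_{J^c} = {v : ⟨supp v⟩_{P*} = J^c}` -/
def sphD {n : ℕ} (F : Type) [Field F] [Fintype F] (le : Fin n → Fin n → Prop)
    (J : Finset (Fin n)) : Finset (Fin n → F) :=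
  Finset.univ.filter fun v => idealCl (fun a b => le b a) (supp v) = Jᶜ

/-- the `E`-sphere `S_{Ī,E} = {v : (⟨supp v⟩_P, I) ∈ E}` -/
def sphE {n : ℕ} (F : Type) [Field F] [Fintype F] (le : Fin n → Fin n → Prop)
    (E : Finset (Fin n) → Finset (Fin n) → Prop) (I : Finset (Fin n)) :
    Finset (Fin n → F) :=
  Finset.univ.filter fun v => E (idealCl le (supp v)) I

/-- the `E*`-sphere `S_{J̄^c,E*} = {v : ⟨supp v⟩_{P*} = K^c for some ideal K with (K,J) ∈ E}` -/
def sphED {n : ℕ} (F : Type) [Field F] [Fintype F] (le : Fin n → Fin n → Prop)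
    (E : Finset (Fin n) → Finset (Fin n) → Prop) (J : Finset (Fin n)) :
    Finset (Fin n → F) :=
  Finset.univ.filter fun v =>
    ∃ K, IsIdeal le K ∧ E K J ∧ idealCl (fun a b => le b a) (supp v) = Kᶜ

/-- the dual code `C^⊥` -/
def dualCode {n : ℕ} {F : Type} [Field F] [Fintype F] (C : Submodule F (Fin n → F)) :
    Submodule F (Fin n → F) where
  carrier := {u | ∀ v ∈ C, dot u v = 0}
  zero_mem' := by intro v hv; simp [dot]
  add_mem' := by
    intro a b ha hb v hv
    have h1 := ha v hv
    have h2 := hb v hv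
    simp only [dot, Pi.add_apply] at *
    simp [add_mul, Finset.sum_add_distrib, h1, h2]
  smul_mem' := by
    intro c a ha v hv
    have h1 := ha v hv
    simp only [dot, Pi.smul_apply, smul_eq_mul] at *
    simp [mul_assoc, ← Finset.mul_sum, h1]

/-- `A_{Ī,E}(C) = |C ∩ S_{Ī,E}|` -/
def AE {n : ℕ} {F : Type} [Field F] [Fintype F] (le : Fin n → Fin n → Prop)
    (E : Finset (Fin n) → Finset (Fin n) → Prop)
    (C : Submodule F (Fin n → F)) (I : Finset (Fin n)) : ℕ :=
  ((sphE F le E I).filter fun v => v ∈ C).card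

/-- `A_{J̄^c,E*}(D) = |D ∩ S_{J̄^c,E*}|` -/
def AED {n : ℕ} {F : Type} [Field F] [Fintype F] (le : Fin n → Fin n → Prop)
    (E : Finset (Fin n) → Finset (Fin n) → Prop)
    (D : Submodule F (Fin n → F)) (J : Finset (Fin n)) : ℕ :=
  ((sphED F le E J).filter fun v => v ∈ D).card

/-- `E` is a MacWilliams-type equivalence relation (w.r.t. the field `F`). -/
def IsMacWilliamsType {n : ℕ} (F : Type) [Field F] [Fintype F]
    (le : Fin n → Fin n → Prop) (E : Finset (Fin n) → Finset (Fin n) → Prop) : Prop :=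
  ∀ C₁ C₂ : Submodule F (Fin n → F),
    (∀ I, IsIdeal le I → AE le E C₁ I = AE le E C₂ I) →
    ∀ J, IsIdeal le J → AED le E (dualCode C₁) J = AED le E (dualCode C₂) J

/-- a hierarchical poset (ordinal sum of antichains) -/
def IsHierarchical {n : ℕ} (le : Fin n → Fin n → Prop) : Prop :=
  ∃ l : Fin n → ℕ, ∀ i j, (le i j ∧ i ≠ j) ↔ l i < l j

/-- `σ` is an automorphism of the poset `le`. -/
def IsAut {n : ℕ} (le : Fin n → Fin n → Prop) (σ : Equiv.Perm (Fin n)) : Prop :=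
  ∀ x y, le x y ↔ le (σ x) (σ y)

/-- `A` and `B` are order-isomorphic with the induced orders. -/
def OrdIso {n : ℕ} (le : Fin n → Fin n → Prop) (A B : Finset (Fin n)) : Prop :=
  ∃ e : {x // x ∈ A} ≃ {x // x ∈ B}, ∀ a b : {x // x ∈ A}, le ↑a ↑b ↔ le ↑(e a) ↑(e b)


/-! ### Auxiliary development -/

section PosetFacts

variable {n : ℕ} {le : Fin n → Fin n → Prop}

/-- minimal elements of `S` w.r.t. `le` -/
def minSet (le : Fin n → Fin n → Prop) (S : Finset (Fin n)) : Finset (Fin n) :=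
  S.filter fun a => ∀ b ∈ S, le b a → b = a

lemma mem_idealCl {X : Finset (Fin n)} {b : Fin n} :
    b ∈ idealCl le X ↔ ∃ a ∈ X, le b a := by simp [idealCl]

lemma flip_po [IsPartialOrder (Fin n) le] : IsPartialOrder (Fin n) (fun a b => le b a) where
  refl a := refl_of le a
  trans a b c h1 h2 := trans_of le h2 h1
  antisymm a b h1 h2 := antisymm_of le h2 h1

lemma subset_idealCl [IsPartialOrder (Fin n) le] (X : Finset (Fin n)) : X ⊆ idealCl le X :=
  fun a ha => mem_idealCl.2 ⟨a, ha, refl_of le a⟩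

lemma isIdeal_idealCl [IsPartialOrder (Fin n) le] (X : Finset (Fin n)) :
    IsIdeal le (idealCl le X) := by
  intro a ha b hba
  rcases mem_idealCl.1 ha with ⟨c, hc, hac⟩
  exact mem_idealCl.2 ⟨c, hc, trans_of le hba hac⟩

lemma idealCl_subset_iff [IsPartialOrder (Fin n) le] {I X : Finset (Fin n)}
    (hI : IsIdeal le I) : idealCl le X ⊆ I ↔ X ⊆ I := by
  constructor
  · exact fun h => (subset_idealCl X).trans h
  · intro h b hb
    rcases mem_idealCl.1 hb with ⟨a, ha, hba⟩
    exact hI a (h ha) b hba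

lemma IsIdeal.compl_upset {K : Finset (Fin n)} (hK : IsIdeal le K) :
    IsIdeal (fun a b => le b a) Kᶜ := by
  intro a ha b hab
  simp only [Finset.mem_compl] at *
  exact fun hb => ha (hK b hb a hab)

lemma isIdeal_of_compl_upset {K : Finset (Fin n)} (hK : IsIdeal (fun a b => le b a) Kᶜ) :
    IsIdeal le K := by
  intro a ha b hab
  by_contra hb
  exact (Finset.mem_compl.1 (hK b (Finset.mem_compl.2 hb) a hab)) ha

lemma exists_minSet_le [IsPartialOrder (Fin n) le] {S : Finset (Fin n)} :
    ∀ x ∈ S, ∃ m ∈ minSet le S, le m x := by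
  suffices H : ∀ k : ℕ, ∀ x ∈ S, (S.filter fun y => le y x).card ≤ k →
      ∃ m ∈ minSet le S, le m x by
    intro x hx; exact H _ x hx le_rfl
  intro k
  induction k with
  | zero =>
    intro x hx h0
    exfalso
    have : x ∈ S.filter fun y => le y x := Finset.mem_filter.2 ⟨hx, refl_of le x⟩
    have := Finset.card_pos.2 ⟨x, this⟩
    omega
  | succ k ih =>
    intro x hx hcard
    by_cases hmin : ∀ b ∈ S, le b x → b = x
    · exact ⟨x, Finset.mem_filter.2 ⟨hx, hmin⟩, refl_of le x⟩
    · push_neg at hmin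
      rcases hmin with ⟨y, hyS, hyx, hne⟩
      have hss : (S.filter fun z => le z y) ⊂ S.filter fun z => le z x := by
        constructor
        · intro z hz
          rcases Finset.mem_filter.1 hz with ⟨hzS, hzy⟩
          exact Finset.mem_filter.2 ⟨hzS, trans_of le hzy hyx⟩
        · intro hsub
          have hxmem : x ∈ S.filter fun z => le z x :=
            Finset.mem_filter.2 ⟨hx, refl_of le x⟩
          have := Finset.mem_filter.1 (hsub hxmem)
          exact hne (antisymm_of le hyx this.2)
      have hlt : (S.filter fun z => le z y).card ≤ k := by
        have := Finset.card_lt_card hss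
        omega
      rcases ih y hyS hlt with ⟨m, hm, hmy⟩
      exact ⟨m, hm, trans_of le hmy hyx⟩

/-- characterization of up-closures equal to complement of an ideal -/
lemma upcl_eq_compl_iff [IsPartialOrder (Fin n) le] {K X : Finset (Fin n)}
    (hK : IsIdeal le K) :
    idealCl (fun a b => le b a) X = Kᶜ ↔ (X ⊆ Kᶜ ∧ minSet le Kᶜ ⊆ X) := by
  haveI := @flip_po n le _
  constructor
  · intro h
    have hX : X ⊆ Kᶜ := by rw [← h]; exact subset_idealCl X
    refine ⟨hX, fun m hm => ?_⟩
    rcases Finset.mem_filter.1 hm with ⟨hmK, hmmin⟩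
    have : m ∈ idealCl (fun a b => le b a) X := h ▸ hmK
    rcases mem_idealCl.1 this with ⟨a, haX, ham⟩
    -- here `ham : le a m` (flipped rel applied)
    have := hmmin a (hX haX) ham
    rwa [this] at haX
  · rintro ⟨hX, hmin⟩
    apply Finset.Subset.antisymm
    · exact (idealCl_subset_iff (le := fun a b => le b a) hK.compl_upset).2 hX
    · intro x hx
      rcases exists_minSet_le (le := le) x hx with ⟨m, hm, hmx⟩
      exact mem_idealCl.2 ⟨m, hmin hm, hmx⟩

lemma union_ideal_of_subset_minSet [IsPartialOrder (Fin n) le] {K T : Finset (Fin n)}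
    (hK : IsIdeal le K) (hT : T ⊆ minSet le Kᶜ) : IsIdeal le (K ∪ T) := by
  intro a ha b hba
  rcases Finset.mem_union.1 ha with haK | haT
  · exact Finset.mem_union_left _ (hK a haK b hba)
  · by_cases hbK : b ∈ K
    · exact Finset.mem_union_left _ hbK
    · have hmin := Finset.mem_filter.1 (hT haT)
      have := hmin.2 b (Finset.mem_compl.2 hbK) hba
      subst this
      exact Finset.mem_union_right _ haT

lemma sdiff_subset_maxSet [IsPartialOrder (Fin n) le] {K L : Finset (Fin n)}
    (hK : IsIdeal le K) (hKL : K ⊆ L) (hL : IsIdeal le L)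
    (hA : L \ K ⊆ minSet le Kᶜ) : L \ K ⊆ maxSet le L := by
  intro x hx
  rcases Finset.mem_sdiff.1 hx with ⟨hxL, hxK⟩
  refine Finset.mem_filter.2 ⟨hxL, fun y hyL hxy => ?_⟩
  by_cases hyK : y ∈ K
  · exact absurd (hK y hyK x hxy) hxK
  · have hymin := Finset.mem_filter.1 (hA (Finset.mem_sdiff.2 ⟨hyL, hyK⟩))
    exact (hymin.2 x (Finset.mem_compl.2 hxK) hxy).symm

lemma maxSet_subset_conds [IsPartialOrder (Fin n) le] {L A : Finset (Fin n)}
    (hL : IsIdeal le L) (hA : A ⊆ maxSet le L) :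
    IsIdeal le (L \ A) ∧ A ⊆ minSet le (L \ A)ᶜ := by
  have hAL : A ⊆ L := hA.trans (Finset.filter_subset _ _)
  constructor
  · intro a ha b hba
    rcases Finset.mem_sdiff.1 ha with ⟨haL, haA⟩
    refine Finset.mem_sdiff.2 ⟨hL a haL b hba, fun hbA => ?_⟩
    have hbmax := Finset.mem_filter.1 (hA hbA)
    have := hbmax.2 a haL hba
    subst this
    exact haA hbA
  · intro x hxA
    have hxL : x ∈ L := hAL hxA
    refine Finset.mem_filter.2 ⟨Finset.mem_compl.2 (fun h => (Finset.mem_sdiff.1 h).2 hxA), ?_⟩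
    intro b hb hbx
    rcases Finset.mem_compl.1 hb |> fun h => h with hbnot
    by_cases hbL : b ∈ L
    · have hbA : b ∈ A := by
        by_contra hbA
        exact hbnot (Finset.mem_sdiff.2 ⟨hbL, hbA⟩)
      have hbmax := Finset.mem_filter.1 (hA hbA)
      exact (hbmax.2 x hxL hbx).symm
    · exact absurd (hL x hxL b hbx) hbL

/-- order isomorphism realized by a global function -/
def IsoOn (le : Fin n → Fin n → Prop) (f : Fin n → Fin n) (A B : Finset (Fin n)) : Prop :=
  A.image f = B ∧ Set.InjOn f ↑A ∧ ∀ a ∈ A, ∀ a' ∈ A, (le a a' ↔ le (f a) (f a'))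

lemma ordIso_refl (A : Finset (Fin n)) : OrdIso le A A :=
  ⟨Equiv.refl _, fun _ _ => Iff.rfl⟩

lemma ordIso_symm {A B : Finset (Fin n)} (h : OrdIso le A B) : OrdIso le B A := by
  rcases h with ⟨e, he⟩
  refine ⟨e.symm, fun a b => ?_⟩
  have := (he (e.symm a) (e.symm b)).symm
  simpa using this

lemma ordIso_trans {A B C : Finset (Fin n)} (h1 : OrdIso le A B) (h2 : OrdIso le B C) :
    OrdIso le A C := by
  rcases h1 with ⟨e1, he1⟩; rcases h2 with ⟨e2, he2⟩
  exact ⟨e1.trans e2, fun a b => (he1 a b).trans (he2 _ _)⟩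

lemma ordIso_card {A B : Finset (Fin n)} (h : OrdIso le A B) : A.card = B.card := by
  rcases h with ⟨e, -⟩
  rw [← Fintype.card_coe, ← Fintype.card_coe]
  exact Fintype.card_congr e

lemma ordIso_of_isoOn {f : Fin n → Fin n} {A B : Finset (Fin n)}
    (h : IsoOn le f A B) : OrdIso le A B := by
  rcases h with ⟨himg, hinj, hord⟩
  have hmem : ∀ x : {x // x ∈ A}, f ↑x ∈ B := by
    intro x; rw [← himg]; exact Finset.mem_image_of_mem f x.2
  have hbij : Function.Bijective (fun x : {x // x ∈ A} => (⟨f ↑x, hmem x⟩ : {x // x ∈ B})) := by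
    constructor
    · intro x y hxy
      have : f ↑x = f ↑y := congrArg Subtype.val hxy
      exact Subtype.ext (hinj x.2 y.2 this)
    · rintro ⟨y, hy⟩
      rw [← himg] at hy
      rcases Finset.mem_image.1 hy with ⟨x, hx, hfx⟩
      exact ⟨⟨x, hx⟩, Subtype.ext hfx⟩
  exact ⟨Equiv.ofBijective _ hbij, fun a b => hord ↑a a.2 ↑b b.2⟩

lemma isoOn_of_ordIso {A B : Finset (Fin n)} (h : OrdIso le A B) :
    ∃ f g : Fin n → Fin n, IsoOn le f A B ∧ IsoOn le g B A ∧
      (∀ x ∈ A, g (f x) = x) ∧ (∀ y ∈ B, f (g y) = y) := by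
  classical
  rcases h with ⟨e, he⟩
  refine ⟨fun x => if h : x ∈ A then ↑(e ⟨x, h⟩) else x,
          fun y => if h : y ∈ B then ↑(e.symm ⟨y, h⟩) else y, ?_, ?_, ?_, ?_⟩
  · refine ⟨?_, ?_, ?_⟩
    · ext y
      simp only [Finset.mem_image]
      constructor
      · rintro ⟨x, hx, rfl⟩
        simp only [dif_pos hx]
        exact (e ⟨x, hx⟩).2
      · intro hy
        refine ⟨↑(e.symm ⟨y, hy⟩), (e.symm ⟨y, hy⟩).2, ?_⟩
        simp only [dif_pos (e.symm ⟨y, hy⟩).2]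
        simp
    · intro x hx y hy hxy
      simp only [Finset.mem_coe] at hx hy
      simp only [dif_pos hx, dif_pos hy] at hxy
      have := Subtype.ext hxy
      exact congrArg Subtype.val (e.injective this)
    · intro a ha a' ha'
      simp only [dif_pos ha, dif_pos ha']
      exact he ⟨a, ha⟩ ⟨a', ha'⟩
  · refine ⟨?_, ?_, ?_⟩
    · ext x
      simp only [Finset.mem_image]
      constructor
      · rintro ⟨y, hy, rfl⟩
        simp only [dif_pos hy]
        exact (e.symm ⟨y, hy⟩).2
      · intro hx
        refine ⟨↑(e ⟨x, hx⟩), (e ⟨x, hx⟩).2, ?_⟩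
        simp only [dif_pos (e ⟨x, hx⟩).2]
        simp
    · intro x hx y hy hxy
      simp only [Finset.mem_coe] at hx hy
      simp only [dif_pos hx, dif_pos hy] at hxy
      have := Subtype.ext hxy
      exact congrArg Subtype.val (e.symm.injective this)
    · intro b hb b' hb'
      simp only [dif_pos hb, dif_pos hb']
      have := he (e.symm ⟨b, hb⟩) (e.symm ⟨b', hb'⟩)
      simpa using this.symm
  · intro x hx
    simp only [dif_pos hx, dif_pos (e ⟨x, hx⟩).2]
    simp
  · intro y hy
    simp only [dif_pos hy, dif_pos (e.symm ⟨y, hy⟩).2]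
    simp


lemma isoOn_maxSet {f : Fin n → Fin n} {L L₂ : Finset (Fin n)} (h : IsoOn le f L L₂)
    {a : Fin n} (ha : a ∈ maxSet le L) : f a ∈ maxSet le L₂ := by
  rcases h with ⟨himg, hinj, hord⟩
  rcases Finset.mem_filter.1 ha with ⟨haL, hamax⟩
  refine Finset.mem_filter.2 ⟨himg ▸ Finset.mem_image_of_mem f haL, ?_⟩
  intro b hbL hab
  rw [← himg] at hbL
  rcases Finset.mem_image.1 hbL with ⟨c, hcL, rfl⟩
  have : le a c := (hord a haL c hcL).2 hab
  rw [hamax c hcL this]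

lemma isoOn_sdiff {f : Fin n → Fin n} {L L₂ A : Finset (Fin n)} (h : IsoOn le f L L₂)
    (hA : A ⊆ L) : IsoOn le f (L \ A) (L₂ \ A.image f) := by
  rcases h with ⟨himg, hinj, hord⟩
  refine ⟨?_, hinj.mono (by intro x hx; exact Finset.mem_coe.2 ((Finset.sdiff_subset) (Finset.mem_coe.1 hx))), ?_⟩
  · ext y
    simp only [Finset.mem_image, Finset.mem_sdiff]
    constructor
    · rintro ⟨x, ⟨hxL, hxA⟩, rfl⟩
      refine ⟨himg ▸ Finset.mem_image_of_mem f hxL, ?_⟩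
      rintro ⟨x', hx'A, hx'⟩
      exact hxA (hinj (hA hx'A) hxL hx' ▸ hx'A)
    · rintro ⟨hyL₂, hy⟩
      rw [← himg] at hyL₂
      rcases Finset.mem_image.1 hyL₂ with ⟨x, hxL, rfl⟩
      exact ⟨x, ⟨hxL, fun hxA => hy ⟨x, hxA, rfl⟩⟩, rfl⟩
  · intro a ha a' ha'
    exact hord a (Finset.mem_sdiff.1 ha).1 a' (Finset.mem_sdiff.1 ha').1

lemma compl_sdiff_eq {M L : Finset (Fin n)} (hML : M ⊆ L) : Mᶜ \ (L \ M) = Lᶜ := by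
  ext x
  simp only [Finset.mem_sdiff, Finset.mem_compl]
  constructor
  · rintro ⟨hxM, hx⟩
    intro hxL
    exact hx ⟨hxL, hxM⟩
  · intro hxL
    exact ⟨fun hxM => hxL (hML hxM), fun h => hxL h.1⟩

lemma compl_union_eq {M X : Finset (Fin n)} : (M ∪ X)ᶜ = Mᶜ \ X := by
  ext x
  simp only [Finset.mem_compl, Finset.mem_union, Finset.mem_sdiff]
  tauto

lemma compl_transfer [IsPartialOrder (Fin n) le] {M M' L : Finset (Fin n)}
    (hM' : IsIdeal le M') {f : Fin n → Fin n}
    (hf : IsoOn le f Mᶜ M'ᶜ) (hL : IsIdeal le L) (hML : M ⊆ L) :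
    IsIdeal le (M' ∪ (L \ M).image f) ∧
    (M' ∪ (L \ M).image f).card = M'.card + (L \ M).card ∧
    IsoOn le f Lᶜ (M' ∪ (L \ M).image f)ᶜ := by
  have hsub : L \ M ⊆ Mᶜ := by
    intro x hx
    rcases Finset.mem_sdiff.1 hx with ⟨-, hxM⟩
    exact Finset.mem_compl.2 hxM
  have himgsub : (L \ M).image f ⊆ M'ᶜ := by
    intro y hy
    rcases Finset.mem_image.1 hy with ⟨x, hx, rfl⟩
    exact hf.1 ▸ Finset.mem_image_of_mem f (hsub hx)
  refine ⟨?_, ?_, ?_⟩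
  · intro a ha b hba
    rcases Finset.mem_union.1 ha with haM | haI
    · exact Finset.mem_union_left _ (hM' a haM b hba)
    · by_cases hbM : b ∈ M'
      · exact Finset.mem_union_left _ hbM
      · rcases Finset.mem_image.1 haI with ⟨x, hx, rfl⟩
        have hbC : b ∈ M'ᶜ := Finset.mem_compl.2 hbM
        rw [← hf.1] at hbC
        rcases Finset.mem_image.1 hbC with ⟨c, hcM, rfl⟩
        have hlec : le c x := (hf.2.2 c hcM x (hsub hx)).2 hba
        have hcL : c ∈ L := hL x (Finset.mem_sdiff.1 hx).1 c hlec
        refine Finset.mem_union_right _ (Finset.mem_image_of_mem f ?_)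
        exact Finset.mem_sdiff.2 ⟨hcL, fun h => (Finset.mem_compl.1 hcM) h⟩
  · rw [Finset.card_union_of_disjoint, Finset.card_image_of_injOn (hf.2.1.mono (by exact_mod_cast hsub))]
    exact Finset.disjoint_left.2 fun a haM' haI => Finset.mem_compl.1 (himgsub haI) haM'
  · have := isoOn_sdiff hf hsub
    rwa [compl_sdiff_eq hML, ← compl_union_eq] at this

end PosetFacts

section Counting

variable {n : ℕ} (F : Type) [Field F] [Fintype F]

def cntB (C : Submodule F (Fin n → F)) (S : Finset (Fin n)) : ℕ :=
  (Finset.univ.filter fun v : Fin n → F => supp v ⊆ S ∧ v ∈ C).card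

def cardC (C : Submodule F (Fin n → F)) : ℕ :=
  (Finset.univ.filter fun v : Fin n → F => v ∈ C).card

lemma mem_dualCode {C : Submodule F (Fin n → F)} {u : Fin n → F} :
    u ∈ dualCode C ↔ ∀ v ∈ C, dot u v = 0 := Iff.rfl

lemma dot_add (u v w : Fin n → F) : dot u (v + w) = dot u v + dot u w := by
  simp [dot, mul_add, Finset.sum_add_distrib]

lemma dot_smul (u w : Fin n → F) (t : F) : dot u (t • w) = t * dot u w := by
  simp only [dot, Pi.smul_apply, smul_eq_mul, Finset.mul_sum]
  exact Finset.sum_congr rfl fun i _ => by ring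

lemma addChar_prod {R' : Type*} [CommMonoid R'] (ψ : AddChar F R') {ι : Type*}
    (s : Finset ι) (f : ι → F) : ψ (∑ i ∈ s, f i) = ∏ i ∈ s, ψ (f i) := by
  classical
  induction s using Finset.induction_on with
  | empty => simp
  | insert _ _ h ih => rw [Finset.sum_insert h, Finset.prod_insert h, AddChar.map_add_eq_mul, ih]

lemma dual_count (C : Submodule F (Fin n → F)) (S : Finset (Fin n)) :
    cardC F C * cntB F (dualCode C) S = Fintype.card F ^ S.card * cntB F C Sᶜ := by
  classical
  have hch : ringChar ℂ ≠ ringChar F := by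
    have hp : (ringChar F).Prime := CharP.char_is_prime F (ringChar F)
    rw [ringChar.eq_zero]
    exact fun h => hp.ne_zero h.symm
  set ψ := AddChar.FiniteField.primitiveChar_to_Complex F with hψdef
  have hψ := AddChar.FiniteField.primitiveChar_to_Complex_isPrimitive F
  set Us := Finset.univ.filter fun u : Fin n → F => supp u ⊆ S with hUs
  set Cf := Finset.univ.filter fun v : Fin n → F => v ∈ C with hCf
  have inner : ∀ u : Fin n → F, (∑ v ∈ Cf, ψ (dot u v)) =
      if u ∈ dualCode C then (cardC F C : ℂ) else 0 := by
    intro u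
    by_cases hu : u ∈ dualCode C
    · rw [if_pos hu]
      have h1 : ∀ v ∈ Cf, ψ (dot u v) = 1 := fun v hv => by
        rw [(mem_dualCode F).1 hu v (Finset.mem_filter.1 hv).2, AddChar.map_zero_eq_one]
      rw [Finset.sum_congr rfl h1, Finset.sum_const, nsmul_eq_mul, mul_one, cardC, hCf]
    · rw [if_neg hu]
      rw [mem_dualCode F] at hu
      push_neg at hu
      obtain ⟨v₀, hv₀C, hc⟩ := hu
      set c := dot u v₀ with hcdef
      have trans : ∀ t : F,
          (∑ v ∈ Cf, ψ (dot u v)) * ψ (t * c) = ∑ v ∈ Cf, ψ (dot u v) := by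
        intro t
        rw [Finset.sum_mul]
        refine Finset.sum_nbij' (fun v => v + t • v₀) (fun v => v - t • v₀) ?_ ?_ ?_ ?_ ?_
        · intro v hv
          rw [hCf, Finset.mem_filter] at hv ⊢
          exact ⟨Finset.mem_univ _, C.add_mem hv.2 (C.smul_mem t hv₀C)⟩
        · intro v hv
          rw [hCf, Finset.mem_filter] at hv ⊢
          exact ⟨Finset.mem_univ _, C.sub_mem hv.2 (C.smul_mem t hv₀C)⟩
        · intro v _; simp
        · intro v _; simp
        · intro v _
          rw [← AddChar.map_add_eq_mul]
          congr 1
          rw [dot_add, dot_smul]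
      by_contra hS0
      have hS0' : (∑ v ∈ Cf, ψ (dot u v)) ≠ 0 := hS0
      have hone : ∀ t : F, ψ (t * c) = 1 := by
        intro t
        have := trans t
        nth_rewrite 2 [← mul_one (∑ v ∈ Cf, ψ (dot u v))] at this
        exact mul_left_cancel₀ hS0' this
      apply hψ hc
      apply AddChar.ext
      intro t
      rw [AddChar.mulShift_apply, mul_comm, hone t]
      rfl
  have outer : ∀ v : Fin n → F, (∑ u ∈ Us, ψ (dot u v)) =
      if supp v ⊆ Sᶜ then ((Fintype.card F : ℂ) ^ S.card) else 0 := by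
    intro v
    have hmemsupp : ∀ (u : Fin n → F) (i : Fin n), i ∈ supp u ↔ u i ≠ 0 := by
      intro u i; simp [supp]
    have hUs' : Us = Fintype.piFinset (fun i => if i ∈ S then (Finset.univ : Finset F) else {0}) := by
      ext u
      rw [hUs, Finset.mem_filter, Fintype.mem_piFinset]
      simp only [Finset.mem_univ, true_and]
      rw [Finset.subset_iff]
      constructor
      · intro h i
        by_cases hi : i ∈ S
        · simp [hi]
        · rw [if_neg hi, Finset.mem_singleton]
          by_contra h0
          exact hi (h ((hmemsupp u i).2 h0))
      · intro h i hi
        have hne := (hmemsupp u i).1 hi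
        by_contra hiS
        have := h i
        rw [if_neg hiS, Finset.mem_singleton] at this
        exact hne this
    rw [hUs']
    have hprod : ∀ u : Fin n → F, ψ (dot u v) = ∏ i, ψ (u i * v i) := fun u =>
      addChar_prod F ψ Finset.univ fun i => u i * v i
    rw [Finset.sum_congr rfl fun u _ => hprod u]
    have hps := Finset.prod_univ_sum (fun i => if i ∈ S then (Finset.univ : Finset F) else {0})
      (fun i a => ψ (a * v i))
    rw [← hps]
    have factor : ∀ i, (∑ a ∈ (if i ∈ S then (Finset.univ : Finset F) else {0}), ψ (a * v i)) =
        if i ∈ S then (if v i = 0 then ((Fintype.card F : ℂ)) else 0) else 1 := by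
      intro i
      by_cases hi : i ∈ S
      · rw [if_pos hi, if_pos hi]
        have := AddChar.sum_mulShift (ψ := ψ) (v i) hψ
        rw [this]
        split_ifs <;> simp
      · rw [if_neg hi, if_neg hi]
        simp
    rw [Finset.prod_congr rfl fun i _ => factor i]
    by_cases hvS : supp v ⊆ Sᶜ
    · rw [if_pos hvS]
      have hz : ∀ i ∈ S, v i = 0 := by
        intro i hi
        by_contra h0
        exact Finset.mem_compl.1 (hvS (Finset.mem_filter.2 ⟨Finset.mem_univ _, h0⟩)) hi
      have : ∀ i, (if i ∈ S then (if v i = 0 then ((Fintype.card F : ℂ)) else 0) else 1) =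
          if i ∈ S then (Fintype.card F : ℂ) else 1 := by
        intro i
        by_cases hi : i ∈ S
        · rw [if_pos hi, if_pos hi, if_pos (hz i hi)]
        · rw [if_neg hi, if_neg hi]
      rw [Finset.prod_congr rfl fun i _ => this i, ← Finset.prod_filter]
      have : Finset.univ.filter (fun i => i ∈ S) = S := by
        ext i; simp
      rw [this, Finset.prod_const]
    · rw [if_neg hvS]
      rw [Finset.subset_iff] at hvS
      push_neg at hvS
      obtain ⟨i, hiv, hiS⟩ := hvS
      rw [Finset.mem_compl, not_not] at hiS
      refine Finset.prod_eq_zero (Finset.mem_univ i) ?_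
      rcases Finset.mem_filter.1 hiv with ⟨-, hne⟩
      rw [if_pos hiS, if_neg hne]
  have key : (cardC F C : ℂ) * (cntB F (dualCode C) S : ℂ) =
      (Fintype.card F : ℂ) ^ S.card * (cntB F C Sᶜ : ℂ) := by
    have T2 : ∑ u ∈ Us, ∑ v ∈ Cf, ψ (dot u v) =
        (cardC F C : ℂ) * (cntB F (dualCode C) S : ℂ) := by
      rw [Finset.sum_congr rfl fun u _ => inner u, ← Finset.sum_filter]
      rw [Finset.sum_const, nsmul_eq_mul, mul_comm]
      congr 2
      rw [hUs, Finset.filter_filter, cntB]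
    have T3 : ∑ v ∈ Cf, ∑ u ∈ Us, ψ (dot u v) =
        (Fintype.card F : ℂ) ^ S.card * (cntB F C Sᶜ : ℂ) := by
      rw [Finset.sum_congr rfl fun v _ => outer v, ← Finset.sum_filter]
      rw [Finset.sum_const, nsmul_eq_mul, mul_comm]
      congr 2
      rw [hCf, Finset.filter_filter, cntB]
      congr 1
      ext v
      simp [and_comm]
    rw [← T2, Finset.sum_comm, T3]
  exact_mod_cast key

end Counting

section Partition

variable {n : ℕ} (le : Fin n → Fin n → Prop) (F : Type) [Field F] [Fintype F]

def cntA (C : Submodule F (Fin n → F)) (M : Finset (Fin n)) : ℕ :=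
  (Finset.univ.filter fun v : Fin n → F => idealCl le (supp v) = M ∧ v ∈ C).card

def cntD (C : Submodule F (Fin n → F)) (K : Finset (Fin n)) : ℕ :=
  (Finset.univ.filter fun v : Fin n → F =>
    idealCl (fun a b => le b a) (supp v) = Kᶜ ∧ v ∈ C).card

def ideals : Finset (Finset (Fin n)) := Finset.univ.filter (IsIdeal le)

lemma mem_ideals {M : Finset (Fin n)} : M ∈ ideals le ↔ IsIdeal le M := by
  simp [ideals]

variable [IsPartialOrder (Fin n) le]

lemma AE_eq_sum (C : Submodule F (Fin n → F)) (I : Finset (Fin n)) :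
    AE le (OrdIso le) C I =
      ∑ M ∈ (ideals le).filter (fun M => OrdIso le M I), cntA le F C M := by
  classical
  rw [AE, sphE, Finset.filter_filter]
  rw [Finset.card_eq_sum_card_fiberwise
    (f := fun v : Fin n → F => idealCl le (supp v))
    (t := (ideals le).filter (fun M => OrdIso le M I))
    (fun v hv => by
      rcases Finset.mem_filter.1 hv with ⟨-, h1, -⟩
      exact Finset.mem_filter.2 ⟨(mem_ideals le).2 (isIdeal_idealCl _), h1⟩)]
  refine Finset.sum_congr rfl fun M hM => ?_
  congr 1
  ext v
  simp only [Finset.mem_filter, Finset.mem_univ, true_and, cntA]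
  constructor
  · rintro ⟨⟨-, hC⟩, heq⟩; exact ⟨heq, hC⟩
  · rintro ⟨heq, hC⟩
    exact ⟨⟨heq ▸ (Finset.mem_filter.1 hM).2, hC⟩, heq⟩

lemma AED_eq_sum (D : Submodule F (Fin n → F)) (J : Finset (Fin n)) :
    AED le (OrdIso le) D J =
      ∑ K ∈ (ideals le).filter (fun K => OrdIso le K J), cntD le F D K := by
  classical
  rw [AED, sphED, Finset.filter_filter]
  rw [Finset.card_eq_sum_card_fiberwise
    (f := fun v : Fin n → F => (idealCl (fun a b => le b a) (supp v))ᶜ)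
    (t := (ideals le).filter (fun K => OrdIso le K J))
    (fun v hv => by
      rcases Finset.mem_filter.1 hv with ⟨-, ⟨K, hKid, hKJ, hKeq⟩, -⟩
      have hKv : (idealCl (fun a b => le b a) (supp v))ᶜ = K := by rw [hKeq, compl_compl]
      show (idealCl (fun a b => le b a) (supp v))ᶜ ∈ _
      rw [hKv]
      exact Finset.mem_filter.2 ⟨(mem_ideals le).2 hKid, hKJ⟩)]
  refine Finset.sum_congr rfl fun K hK => ?_
  congr 1
  ext v
  simp only [Finset.mem_filter, Finset.mem_univ, true_and, cntD]
  constructor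
  · rintro ⟨⟨-, hC⟩, heq⟩
    refine ⟨?_, hC⟩
    rw [← heq, compl_compl]
  · rintro ⟨heq, hC⟩
    rcases Finset.mem_filter.1 hK with ⟨hKid, hKJ⟩
    exact ⟨⟨⟨K, (mem_ideals le).1 hKid, hKJ, heq⟩, hC⟩, by rw [heq, compl_compl]⟩

lemma cardC_eq_sum (C : Submodule F (Fin n → F)) :
    cardC F C = ∑ M ∈ ideals le, cntA le F C M := by
  classical
  rw [cardC]
  rw [Finset.card_eq_sum_card_fiberwise
    (f := fun v : Fin n → F => idealCl le (supp v))
    (t := ideals le)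
    (fun v _ => (mem_ideals le).2 (isIdeal_idealCl _))]
  refine Finset.sum_congr rfl fun M hM => ?_
  congr 1
  ext v
  simp only [Finset.mem_filter, Finset.mem_univ, true_and, cntA]
  tauto

lemma neg_one_powerset_sum {α : Type*} [DecidableEq α] (X : Finset α) :
    ∑ T ∈ X.powerset, (-1:ℚ)^T.card = if X = ∅ then 1 else 0 := by
  have h := Finset.sum_powerset_neg_one_pow_card (x := X)
  have h2 : ((∑ m ∈ X.powerset, (-1:ℤ)^m.card : ℤ) : ℚ) = ((if X = ∅ then (1:ℤ) else 0 : ℤ) : ℚ) := by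
    exact_mod_cast congrArg (fun z : ℤ => (z : ℚ)) h
  push_cast at h2
  simpa using h2

lemma powerset_filter_subset {α : Type*} [DecidableEq α] {A X : Finset α} (hX : X ⊆ A) :
    (A.powerset).filter (fun T => T ⊆ X) = X.powerset := by
  ext T
  simp only [Finset.mem_filter, Finset.mem_powerset]
  exact ⟨fun h => h.2, fun h => ⟨h.trans hX, h⟩⟩

lemma cntD_incl_excl (D : Submodule F (Fin n → F)) {K : Finset (Fin n)}
    (hK : IsIdeal le K) :
    (cntD le F D K : ℚ) = ∑ T ∈ (minSet le Kᶜ).powerset,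
      (-1 : ℚ) ^ T.card * cntB F D (Kᶜ \ T) := by
  classical
  have hcard : ∀ (s : Finset (Fin n → F)), (s.card : ℚ) = ∑ v, if v ∈ s then (1:ℚ) else 0 := by
    intro s
    rw [Finset.sum_ite_mem, Finset.univ_inter, Finset.sum_const, nsmul_eq_mul, mul_one]
  rw [cntD, hcard]
  have hrhs : ∀ T, (cntB F D (Kᶜ \ T) : ℚ) = ∑ v, if supp v ⊆ Kᶜ \ T ∧ v ∈ D then (1:ℚ) else 0 := by
    intro T
    rw [cntB, hcard]
    refine Finset.sum_congr rfl fun v _ => ?_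
    simp [Finset.mem_filter]
  simp_rw [hrhs, Finset.mul_sum]
  rw [Finset.sum_comm]
  refine Finset.sum_congr rfl fun v _ => ?_
  simp only [Finset.mem_filter, Finset.mem_univ, true_and]
  by_cases hD : v ∈ D
  · simp only [hD, and_true]
    by_cases hsupp : supp v ⊆ Kᶜ
    · have hstep : ∀ T ∈ (minSet le Kᶜ).powerset,
          (-1:ℚ)^T.card * (if supp v ⊆ Kᶜ \ T then (1:ℚ) else 0) =
          if T ⊆ minSet le Kᶜ \ supp v then (-1:ℚ)^T.card else 0 := by
        intro T hT
        have hTm := Finset.mem_powerset.1 hT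
        have hiff : (supp v ⊆ Kᶜ \ T) ↔ T ⊆ minSet le Kᶜ \ supp v := by
          constructor
          · intro h x hxT
            refine Finset.mem_sdiff.2 ⟨hTm hxT, fun hxs => ?_⟩
            exact (Finset.mem_sdiff.1 (h hxs)).2 hxT
          · intro h x hxs
            refine Finset.mem_sdiff.2 ⟨hsupp hxs, fun hxT => ?_⟩
            exact (Finset.mem_sdiff.1 (h hxT)).2 hxs
        rw [if_congr hiff rfl rfl]
        split_ifs <;> ring
      rw [Finset.sum_congr rfl hstep]
      rw [← Finset.sum_filter]
      rw [powerset_filter_subset (Finset.sdiff_subset)]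
      rw [neg_one_powerset_sum]
      have hiff2 : (idealCl (fun a b => le b a) (supp v) = Kᶜ) ↔
          (minSet le Kᶜ \ supp v = ∅) := by
        rw [upcl_eq_compl_iff hK, Finset.sdiff_eq_empty_iff_subset]
        exact ⟨fun h => h.2, fun h => ⟨hsupp, h⟩⟩
      rw [if_congr hiff2 rfl rfl]
    · have hne : ¬ idealCl (fun a b => le b a) (supp v) = Kᶜ := by
        rw [upcl_eq_compl_iff hK]
        exact fun h => hsupp h.1
      rw [if_neg hne]
      refine (Finset.sum_eq_zero fun T hT => ?_).symm
      have hno : ¬ (supp v ⊆ Kᶜ \ T) := by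
        intro h1
        exact hsupp fun x hx => (Finset.mem_sdiff.1 (h1 hx)).1
      rw [if_neg hno, mul_zero]
  · have hne : ¬ (idealCl (fun a b => le b a) (supp v) = Kᶜ ∧ v ∈ D) := fun h => hD h.2
    rw [if_neg hne]
    refine (Finset.sum_eq_zero fun T hT => ?_).symm
    have : ¬ (supp v ⊆ Kᶜ \ T ∧ v ∈ D) := fun h => hD h.2
    rw [if_neg this, mul_zero]

lemma cntB_eq_sum (C : Submodule F (Fin n → F)) {S : Finset (Fin n)} (hS : IsIdeal le S) :
    (cntB F C S : ℚ) = ∑ M ∈ ideals le, (if M ⊆ S then (1:ℚ) else 0) * cntA le F C M := by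
  classical
  have h1 : cntB F C S = ∑ M ∈ (ideals le).filter (fun M => M ⊆ S), cntA le F C M := by
    rw [cntB]
    rw [Finset.card_eq_sum_card_fiberwise
      (f := fun v : Fin n → F => idealCl le (supp v))
      (t := (ideals le).filter (fun M => M ⊆ S))
      (fun v hv => by
        rcases Finset.mem_filter.1 hv with ⟨-, h1, -⟩
        exact Finset.mem_filter.2 ⟨(mem_ideals le).2 (isIdeal_idealCl _),
          (idealCl_subset_iff hS).2 h1⟩)]
    refine Finset.sum_congr rfl fun M hM => ?_
    congr 1
    ext v
    simp only [Finset.mem_filter, Finset.mem_univ, true_and, cntA]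
    constructor
    · rintro ⟨⟨-, hC⟩, heq⟩; exact ⟨heq, hC⟩
    · rintro ⟨heq, hC⟩
      refine ⟨⟨?_, hC⟩, heq⟩
      exact (subset_idealCl (supp v)).trans (heq ▸ (Finset.mem_filter.1 hM).2)
  rw [h1]
  push_cast
  rw [Finset.sum_filter]
  refine Finset.sum_congr rfl fun M _ => ?_
  split_ifs <;> simp

end Partition

section Master

variable {n : ℕ} (le : Fin n → Fin n → Prop) [IsPartialOrder (Fin n) le]

/-- the inner coefficient -/
def cJ (J L : Finset (Fin n)) : ℚ :=
  ∑ A ∈ (maxSet le L).powerset, (-1:ℚ)^A.card * (if OrdIso le (L \ A) J then 1 else 0)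

/-- the outer coefficient -/
def dJ (q : ℚ) (J M : Finset (Fin n)) : ℚ :=
  ∑ L ∈ (ideals le).filter (fun L => M ⊆ L), q^(n - L.card) * cJ le J L

lemma dRaw_eq_dJ (q : ℚ) (J M : Finset (Fin n)) :
    ∑ K ∈ (ideals le).filter (fun K => OrdIso le K J),
      ∑ T ∈ (minSet le Kᶜ).powerset,
        (-1:ℚ)^T.card * q^(n - K.card - T.card) * (if M ⊆ K ∪ T then 1 else 0) =
    dJ le q J M := by
  classical
  have hL : ∀ K ∈ (ideals le).filter (fun K => OrdIso le K J),
      ∑ T ∈ (minSet le Kᶜ).powerset,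
        (-1:ℚ)^T.card * q^(n - K.card - T.card) * (if M ⊆ K ∪ T then 1 else 0) =
      ∑ T ∈ ((minSet le Kᶜ).powerset).filter (fun T => M ⊆ K ∪ T),
        (-1:ℚ)^T.card * q^(n - (K ∪ T).card) := by
    intro K hK
    rw [Finset.sum_filter]
    refine Finset.sum_congr rfl fun T hT => ?_
    have hTK : Disjoint K T := by
      refine Finset.disjoint_left.2 fun x hxK hxT => ?_
      have := (Finset.mem_powerset.1 hT) hxT
      exact Finset.mem_compl.1 (Finset.mem_of_mem_filter x this) hxK
    have hcardu : (K ∪ T).card = K.card + T.card := Finset.card_union_of_disjoint hTK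
    rw [hcardu, Nat.sub_sub]
    split_ifs <;> ring
  rw [Finset.sum_congr rfl hL]
  rw [Finset.sum_sigma']
  have hR : ∀ L ∈ (ideals le).filter (fun L => M ⊆ L),
      q^(n - L.card) * cJ le J L =
      ∑ A ∈ ((maxSet le L).powerset).filter (fun A => OrdIso le (L \ A) J),
        (-1:ℚ)^A.card * q^(n - L.card) := by
    intro L hL
    rw [cJ, Finset.mul_sum, Finset.sum_filter]
    refine Finset.sum_congr rfl fun A hA => ?_
    split_ifs <;> ring
  rw [dJ, Finset.sum_congr rfl hR, Finset.sum_sigma']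
  refine Finset.sum_nbij' (fun p => ⟨p.1 ∪ p.2, p.2⟩) (fun p => ⟨p.1 \ p.2, p.2⟩) ?_ ?_ ?_ ?_ ?_
  · rintro ⟨K, T⟩ hp
    rcases Finset.mem_sigma.1 hp with ⟨hK, hT⟩
    rcases Finset.mem_filter.1 hK with ⟨hKid, hKJ⟩
    rcases Finset.mem_filter.1 hT with ⟨hTp, hMKT⟩
    have hKid' := (mem_ideals le).1 hKid
    have hTmin := Finset.mem_powerset.1 hTp
    have hUid : IsIdeal le (K ∪ T) := union_ideal_of_subset_minSet hKid' hTmin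
    have hTdisj : Disjoint K T := by
      refine Finset.disjoint_left.2 fun x hxK hxT => ?_
      exact Finset.mem_compl.1 (Finset.mem_of_mem_filter x (hTmin hxT)) hxK
    have hKsub : K ⊆ K ∪ T := Finset.subset_union_left
    have hsd : (K ∪ T) \ K = T := Finset.union_sdiff_cancel_left hTdisj
    refine Finset.mem_sigma.2 ⟨Finset.mem_filter.2 ⟨(mem_ideals le).2 hUid, hMKT⟩, ?_⟩
    refine Finset.mem_filter.2 ⟨Finset.mem_powerset.2 ?_, ?_⟩
    · have := sdiff_subset_maxSet hKid' hKsub hUid (by rw [hsd]; exact hTmin)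
      rwa [hsd] at this
    · have h2 : (K ∪ T) \ T = K := Finset.union_sdiff_cancel_right hTdisj
      rw [h2]
      exact hKJ
  · rintro ⟨L, A⟩ hp
    rcases Finset.mem_sigma.1 hp with ⟨hLm, hAm⟩
    rcases Finset.mem_filter.1 hLm with ⟨hLid, hML⟩
    rcases Finset.mem_filter.1 hAm with ⟨hAp, hAJ⟩
    have hLid' := (mem_ideals le).1 hLid
    have hAmax := Finset.mem_powerset.1 hAp
    obtain ⟨hKid, hAmin⟩ := maxSet_subset_conds hLid' hAmax
    refine Finset.mem_sigma.2 ⟨Finset.mem_filter.2 ⟨(mem_ideals le).2 hKid, hAJ⟩, ?_⟩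
    refine Finset.mem_filter.2 ⟨Finset.mem_powerset.2 hAmin, ?_⟩
    have hAL : A ⊆ L := hAmax.trans (Finset.filter_subset _ _)
    have : L \ A ∪ A = L := Finset.sdiff_union_of_subset hAL
    rw [this]
    exact hML
  · rintro ⟨K, T⟩ hp
    rcases Finset.mem_sigma.1 hp with ⟨hK, hT⟩
    rcases Finset.mem_filter.1 hT with ⟨hTp, -⟩
    have hTmin := Finset.mem_powerset.1 hTp
    have hTdisj : Disjoint K T := by
      refine Finset.disjoint_left.2 fun x hxK hxT => ?_
      exact Finset.mem_compl.1 (Finset.mem_of_mem_filter x (hTmin hxT)) hxK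
    simp only [Sigma.mk.inj_iff, heq_eq_eq]
    exact ⟨Finset.union_sdiff_cancel_right hTdisj, trivial⟩
  · rintro ⟨L, A⟩ hp
    rcases Finset.mem_sigma.1 hp with ⟨hLm, hAm⟩
    have hAmax := Finset.mem_powerset.1 (Finset.mem_filter.1 hAm).1
    have hAL : A ⊆ L := hAmax.trans (Finset.filter_subset _ _)
    simp only [Sigma.mk.inj_iff, heq_eq_eq]
    exact ⟨Finset.sdiff_union_of_subset hAL, trivial⟩
  · rintro ⟨K, T⟩ hp
    rfl

lemma cJ_congr {J L L₂ : Finset (Fin n)} (h : OrdIso le L L₂) : cJ le J L = cJ le J L₂ := by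
  classical
  obtain ⟨f, g, hf, hg, hgf, hfg⟩ := isoOn_of_ordIso h
  rw [cJ, cJ]
  have hmaxsub : maxSet le L ⊆ L := Finset.filter_subset _ _
  have hmaxsub₂ : maxSet le L₂ ⊆ L₂ := Finset.filter_subset _ _
  refine Finset.sum_nbij' (fun A => A.image f) (fun B => B.image g) ?_ ?_ ?_ ?_ ?_
  · intro A hA
    refine Finset.mem_powerset.2 fun y hy => ?_
    rcases Finset.mem_image.1 hy with ⟨x, hx, rfl⟩
    exact isoOn_maxSet hf (Finset.mem_powerset.1 hA hx)
  · intro B hB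
    refine Finset.mem_powerset.2 fun y hy => ?_
    rcases Finset.mem_image.1 hy with ⟨x, hx, rfl⟩
    exact isoOn_maxSet hg (Finset.mem_powerset.1 hB hx)
  · intro A hA
    show (A.image f).image g = A
    rw [Finset.image_image]
    have : ∀ x ∈ A, (g ∘ f) x = id x := fun x hx =>
      hgf x (hmaxsub (Finset.mem_powerset.1 hA hx))
    rw [Finset.image_congr fun x hx => this x hx, Finset.image_id]
  · intro B hB
    show (B.image g).image f = B
    rw [Finset.image_image]
    have : ∀ x ∈ B, (f ∘ g) x = id x := fun x hx =>
      hfg x (hmaxsub₂ (Finset.mem_powerset.1 hB hx))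
    rw [Finset.image_congr fun x hx => this x hx, Finset.image_id]
  · intro A hA
    have hAL : A ⊆ L := (Finset.mem_powerset.1 hA).trans hmaxsub
    have hcard : (A.image f).card = A.card :=
      Finset.card_image_of_injOn (hf.2.1.mono (by exact_mod_cast hAL))
    rw [hcard]
    congr 1
    have hiso : OrdIso le (L \ A) (L₂ \ A.image f) := ordIso_of_isoOn (isoOn_sdiff hf hAL)
    have : OrdIso le (L \ A) J ↔ OrdIso le (L₂ \ A.image f) J :=
      ⟨fun hh => ordIso_trans (ordIso_symm hiso) hh, fun hh => ordIso_trans hiso hh⟩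
    rw [if_congr this rfl rfl]

lemma dJ_congr (hcomp : ∀ I J : Finset (Fin n), IsIdeal le I → IsIdeal le J →
      (OrdIso le I J ↔ OrdIso le Iᶜ Jᶜ))
    (q : ℚ) {J M M' : Finset (Fin n)} (hM : IsIdeal le M) (hM' : IsIdeal le M')
    (hMM' : OrdIso le M M') : dJ le q J M = dJ le q J M' := by
  classical
  have hcc : OrdIso le Mᶜ M'ᶜ := (hcomp M M' hM hM').1 hMM'
  obtain ⟨f, g, hf, hg, hgf, hfg⟩ := isoOn_of_ordIso hcc
  have hcardMM' : M.card = M'.card := ordIso_card hMM'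
  rw [dJ, dJ]
  refine Finset.sum_nbij' (fun L => M' ∪ (L \ M).image f) (fun L' => M ∪ (L' \ M').image g)
    ?_ ?_ ?_ ?_ ?_
  · intro L hL
    rcases Finset.mem_filter.1 hL with ⟨hLid, hML⟩
    obtain ⟨hid, -, -⟩ := compl_transfer hM' hf ((mem_ideals le).1 hLid) hML
    exact Finset.mem_filter.2 ⟨(mem_ideals le).2 hid, Finset.subset_union_left⟩
  · intro L' hL'
    rcases Finset.mem_filter.1 hL' with ⟨hLid', hML'⟩
    obtain ⟨hid, -, -⟩ := compl_transfer hM hg ((mem_ideals le).1 hLid') hML'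
    exact Finset.mem_filter.2 ⟨(mem_ideals le).2 hid, Finset.subset_union_left⟩
  · intro L hL
    rcases Finset.mem_filter.1 hL with ⟨hLid, hML⟩
    have hsubC : L \ M ⊆ Mᶜ := fun x hx =>
      Finset.mem_compl.2 (Finset.mem_sdiff.1 hx).2
    have himgC : (L \ M).image f ⊆ M'ᶜ := by
      intro y hy
      rcases Finset.mem_image.1 hy with ⟨x, hx, rfl⟩
      exact hf.1 ▸ Finset.mem_image_of_mem f (hsubC hx)
    have hdisj : Disjoint M' ((L \ M).image f) :=
      Finset.disjoint_left.2 fun x hxM hxI => Finset.mem_compl.1 (himgC hxI) hxM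
    show M ∪ ((M' ∪ (L \ M).image f) \ M').image g = L
    rw [Finset.union_sdiff_cancel_left hdisj, Finset.image_image]
    have : ∀ x ∈ L \ M, (g ∘ f) x = id x := fun x hx => hgf x (hsubC hx)
    rw [Finset.image_congr fun x hx => this x hx, Finset.image_id,
      Finset.union_sdiff_of_subset hML]
  · intro L' hL'
    rcases Finset.mem_filter.1 hL' with ⟨hLid', hML'⟩
    have hsubC : L' \ M' ⊆ M'ᶜ := fun x hx =>
      Finset.mem_compl.2 (Finset.mem_sdiff.1 hx).2
    have himgC : (L' \ M').image g ⊆ Mᶜ := by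
      intro y hy
      rcases Finset.mem_image.1 hy with ⟨x, hx, rfl⟩
      exact hg.1 ▸ Finset.mem_image_of_mem g (hsubC hx)
    have hdisj : Disjoint M ((L' \ M').image g) :=
      Finset.disjoint_left.2 fun x hxM hxI => Finset.mem_compl.1 (himgC hxI) hxM
    show M' ∪ ((M ∪ (L' \ M').image g) \ M).image f = L'
    rw [Finset.union_sdiff_cancel_left hdisj, Finset.image_image]
    have : ∀ x ∈ L' \ M', (f ∘ g) x = id x := fun x hx => hfg x (hsubC hx)
    rw [Finset.image_congr fun x hx => this x hx, Finset.image_id,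
      Finset.union_sdiff_of_subset hML']
  · intro L hL
    rcases Finset.mem_filter.1 hL with ⟨hLid, hML⟩
    have hLid' := (mem_ideals le).1 hLid
    obtain ⟨hid, hcard, hisoC⟩ := compl_transfer hM' hf hLid' hML
    have hcardL : (M' ∪ (L \ M).image f).card = L.card := by
      rw [hcard, Finset.card_sdiff_of_subset hML, ← hcardMM']
      have := Finset.card_le_card hML
      omega
    rw [hcardL]
    congr 1
    have hisoLL' : OrdIso le L (M' ∪ (L \ M).image f) :=
      (hcomp L (M' ∪ (L \ M).image f) hLid' hid).2 (ordIso_of_isoOn hisoC)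
    exact cJ_congr le hisoLL'

end Master

section Assembly

variable {n : ℕ} (le : Fin n → Fin n → Prop) [IsPartialOrder (Fin n) le]
variable (F : Type) [Field F] [Fintype F]

lemma master (C : Submodule F (Fin n → F)) {J : Finset (Fin n)} (hJ : IsIdeal le J) :
    (cardC F C : ℚ) * (AED le (OrdIso le) (dualCode C) J : ℚ) =
      ∑ M ∈ ideals le, (cntA le F C M : ℚ) * dJ le (Fintype.card F : ℚ) J M := by
  classical
  set q : ℚ := (Fintype.card F : ℚ) with hq
  have step1 : (cardC F C : ℚ) * (AED le (OrdIso le) (dualCode C) J : ℚ) =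
      ∑ K ∈ (ideals le).filter (fun K => OrdIso le K J),
        (cardC F C : ℚ) * (cntD le F (dualCode C) K : ℚ) := by
    rw [AED_eq_sum le F (dualCode C) J]
    push_cast
    rw [Finset.mul_sum]
  rw [step1]
  have step2 : ∀ K ∈ (ideals le).filter (fun K => OrdIso le K J),
      (cardC F C : ℚ) * (cntD le F (dualCode C) K : ℚ) =
      ∑ T ∈ (minSet le Kᶜ).powerset,
        (-1:ℚ)^T.card * q^(n - K.card - T.card) *
          ∑ M ∈ ideals le, (if M ⊆ K ∪ T then (1:ℚ) else 0) * (cntA le F C M : ℚ) := by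
    intro K hK
    have hKid : IsIdeal le K := (mem_ideals le).1 (Finset.mem_filter.1 hK).1
    rw [cntD_incl_excl le F (dualCode C) hKid, Finset.mul_sum]
    refine Finset.sum_congr rfl fun T hT => ?_
    have hTmin := Finset.mem_powerset.1 hT
    have hUid : IsIdeal le (K ∪ T) := union_ideal_of_subset_minSet hKid hTmin
    have hSc : (Kᶜ \ T)ᶜ = K ∪ T := by
      ext x
      simp only [Finset.mem_compl, Finset.mem_sdiff, Finset.mem_union]
      tauto
    have hScard : (Kᶜ \ T).card = n - K.card - T.card := by
      rw [Finset.card_sdiff_of_subset (fun x hx => Finset.mem_of_mem_filter x (hTmin hx)),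
        Finset.card_compl, Fintype.card_fin]
    have hdc := dual_count F C (Kᶜ \ T)
    have hdcQ : (cardC F C : ℚ) * (cntB F (dualCode C) (Kᶜ \ T) : ℚ) =
        q^(n - K.card - T.card) * (cntB F C (K ∪ T) : ℚ) := by
      have := congrArg (fun z : ℕ => (z : ℚ)) hdc
      push_cast at this
      rw [hSc, hScard] at this
      exact this
    calc (cardC F C : ℚ) * ((-1:ℚ)^T.card * (cntB F (dualCode C) (Kᶜ \ T) : ℚ))
        = (-1:ℚ)^T.card * ((cardC F C : ℚ) * (cntB F (dualCode C) (Kᶜ \ T) : ℚ)) := by ring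
      _ = (-1:ℚ)^T.card * (q^(n - K.card - T.card) * (cntB F C (K ∪ T) : ℚ)) := by rw [hdcQ]
      _ = (-1:ℚ)^T.card * q^(n - K.card - T.card) *
            ∑ M ∈ ideals le, (if M ⊆ K ∪ T then (1:ℚ) else 0) * (cntA le F C M : ℚ) := by
          rw [cntB_eq_sum le F C hUid]; ring
  rw [Finset.sum_congr rfl step2]
  have step3 : ∀ K ∈ (ideals le).filter (fun K => OrdIso le K J),
      (∑ T ∈ (minSet le Kᶜ).powerset,
        (-1:ℚ)^T.card * q^(n - K.card - T.card) *
          ∑ M ∈ ideals le, (if M ⊆ K ∪ T then (1:ℚ) else 0) * (cntA le F C M : ℚ)) =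
      ∑ M ∈ ideals le, ∑ T ∈ (minSet le Kᶜ).powerset,
        (-1:ℚ)^T.card * q^(n - K.card - T.card) *
          (if M ⊆ K ∪ T then (1:ℚ) else 0) * (cntA le F C M : ℚ) := by
    intro K _
    rw [Finset.sum_comm]
    refine Finset.sum_congr rfl fun T _ => ?_
    rw [Finset.mul_sum]
    refine Finset.sum_congr rfl fun M _ => ?_
    ring
  rw [Finset.sum_congr rfl step3, Finset.sum_comm]
  refine Finset.sum_congr rfl fun M _ => ?_
  rw [← dRaw_eq_dJ le q J M, Finset.mul_sum]
  refine Finset.sum_congr rfl fun K _ => ?_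
  rw [Finset.mul_sum]
  refine Finset.sum_congr rfl fun T _ => ?_
  ring

lemma avg (w f g : Finset (Fin n) → ℚ)
    (hw : ∀ M ∈ ideals le, ∀ M' ∈ ideals le, OrdIso le M M' → w M = w M')
    (hfg : ∀ I ∈ ideals le,
      (∑ M ∈ (ideals le).filter (fun M => OrdIso le M I), f M) =
      ∑ M ∈ (ideals le).filter (fun M => OrdIso le M I), g M) :
    ∑ M ∈ ideals le, f M * w M = ∑ M ∈ ideals le, g M * w M := by
  classical
  set c : Finset (Fin n) → ℚ :=
    fun M => (((ideals le).filter (fun M' => OrdIso le M' M)).card : ℚ) with hc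
  have hclseq : ∀ M ∈ ideals le, ∀ M' ∈ ideals le, OrdIso le M M' →
      (ideals le).filter (fun X => OrdIso le X M) =
      (ideals le).filter (fun X => OrdIso le X M') := by
    intro M hM M' hM' hMM'
    refine Finset.filter_congr fun X _ => ?_
    exact ⟨fun h => ordIso_trans h hMM', fun h => ordIso_trans h (ordIso_symm hMM')⟩
  have hcpos : ∀ M ∈ ideals le, c M ≠ 0 := by
    intro M hM
    have : M ∈ (ideals le).filter (fun M' => OrdIso le M' M) :=
      Finset.mem_filter.2 ⟨hM, ordIso_refl M⟩
    have hpos := Finset.card_pos.2 ⟨M, this⟩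
    simp only [hc]
    exact_mod_cast hpos.ne'
  have key : ∀ h : Finset (Fin n) → ℚ,
      ∑ M ∈ ideals le, h M * w M =
      ∑ M ∈ ideals le,
        (∑ M' ∈ (ideals le).filter (fun X => OrdIso le X M), h M') * (w M / c M) := by
    intro h
    have e1 : ∀ M ∈ ideals le,
        (∑ M' ∈ (ideals le).filter (fun X => OrdIso le X M), h M') * (w M / c M) =
        ∑ M' ∈ (ideals le).filter (fun X => OrdIso le X M), h M' * (w M' / c M') := by
      intro M hM
      rw [Finset.sum_mul]
      refine Finset.sum_congr rfl fun M' hM' => ?_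
      rcases Finset.mem_filter.1 hM' with ⟨hM'i, hM'M⟩
      have hw' : w M = w M' := hw M hM M' hM'i (ordIso_symm hM'M)
      have hceq : c M = c M' := by
        simp only [hc]
        rw [hclseq M' hM'i M hM hM'M]
      rw [hw', hceq]
    rw [Finset.sum_congr rfl e1]
    have e2 : ∀ M ∈ ideals le,
        (∑ M' ∈ (ideals le).filter (fun X => OrdIso le X M), h M' * (w M' / c M')) =
        ∑ M' ∈ ideals le, if OrdIso le M' M then h M' * (w M' / c M') else 0 := by
      intro M _
      rw [Finset.sum_filter]
    rw [Finset.sum_congr rfl e2, Finset.sum_comm]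
    refine Finset.sum_congr rfl fun M' hM' => ?_
    have e3 : (∑ M ∈ ideals le, if OrdIso le M' M then h M' * (w M' / c M') else 0) =
        (((ideals le).filter (fun M => OrdIso le M' M)).card : ℚ) * (h M' * (w M' / c M')) := by
      rw [← Finset.sum_filter, Finset.sum_const, nsmul_eq_mul]
    rw [e3]
    have e4 : (ideals le).filter (fun M => OrdIso le M' M) =
        (ideals le).filter (fun M => OrdIso le M M') := by
      refine Finset.filter_congr fun X _ => ?_
      exact ⟨fun h => ordIso_symm h, fun h => ordIso_symm h⟩
    rw [e4]
    have : (((ideals le).filter (fun M => OrdIso le M M')).card : ℚ) = c M' := rfl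
    rw [this]
    field_simp [hcpos M' hM']
  rw [key f, key g]
  refine Finset.sum_congr rfl fun M hM => ?_
  rw [hfg M hM]

end Assembly

/-- Theorem 4.1(iii), (a) ⇒ (b): if `P` is a complement isomorphism poset then `E_S` is of
MacWilliams type. -/
theorem stmt_17 {n : ℕ} (hn : 0 < n) (le : Fin n → Fin n → Prop)
    [IsPartialOrder (Fin n) le]
    (F : Type) [Field F] [Fintype F]
    (hcomp : ∀ I J : Finset (Fin n), IsIdeal le I → IsIdeal le J →
      (OrdIso le I J ↔ OrdIso le Iᶜ Jᶜ)) :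
    IsMacWilliamsType F le (OrdIso le) := by
  classical
  intro C₁ C₂ hA J hJ
  set q : ℚ := (Fintype.card F : ℚ) with hq
  have hsums : ∀ I ∈ ideals le,
      (∑ M ∈ (ideals le).filter (fun M => OrdIso le M I), (cntA le F C₁ M : ℚ)) =
      ∑ M ∈ (ideals le).filter (fun M => OrdIso le M I), (cntA le F C₂ M : ℚ) := by
    intro I hI
    have h := hA I ((mem_ideals le).1 hI)
    rw [AE_eq_sum le F C₁ I, AE_eq_sum le F C₂ I] at h
    exact_mod_cast h
  have hwd : ∀ M ∈ ideals le, ∀ M' ∈ ideals le, OrdIso le M M' →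
      dJ le q J M = dJ le q J M' := fun M hM M' hM' hMM' =>
    dJ_congr le hcomp q ((mem_ideals le).1 hM) ((mem_ideals le).1 hM') hMM'
  have h1 : ∑ M ∈ ideals le, (cntA le F C₁ M : ℚ) * dJ le q J M =
      ∑ M ∈ ideals le, (cntA le F C₂ M : ℚ) * dJ le q J M :=
    avg le (dJ le q J) _ _ hwd hsums
  have hcard : (cardC F C₁ : ℚ) = (cardC F C₂ : ℚ) := by
    have h2 : ∑ M ∈ ideals le, (cntA le F C₁ M : ℚ) * (1:ℚ) =
        ∑ M ∈ ideals le, (cntA le F C₂ M : ℚ) * (1:ℚ) :=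
      avg le (fun _ => (1:ℚ)) _ _ (fun _ _ _ _ _ => rfl) hsums
    simp only [mul_one] at h2
    rw [cardC_eq_sum le F C₁, cardC_eq_sum le F C₂]
    push_cast
    exact h2
  have hm1 := master le F C₁ hJ
  have hm2 := master le F C₂ hJ
  have hpos : (cardC F C₁ : ℚ) ≠ 0 := by
    have : (0 : Fin n → F) ∈ Finset.univ.filter (fun v : Fin n → F => v ∈ C₁) :=
      Finset.mem_filter.2 ⟨Finset.mem_univ _, C₁.zero_mem⟩
    have hpos := Finset.card_pos.2 ⟨_, this⟩
    rw [cardC]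
    exact_mod_cast hpos.ne'
  have hfinal : (cardC F C₁ : ℚ) * (AED le (OrdIso le) (dualCode C₁) J : ℚ) =
      (cardC F C₁ : ℚ) * (AED le (OrdIso le) (dualCode C₂) J : ℚ) := by
    rw [hm1, h1, ← hm2, ← hcard]
  have := mul_left_cancel₀ hpos hfinal
  exact_mod_cast this

end
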